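/- (Theorem 1, product-metric version) Let (X, ‖·‖) be a normed space and Y = {1,...,C} labels with metric |·|. Fix ε > 0 and equip X × Y with the metric ‖x - x'‖ + ε|y - y'|. Suppose ℓ : X × Y → R is K-Lipschitz with respect to this metric. Let Ω : X → Y be a labeling function, D = {x_1,...,x_N}, and let C(π) = {x_j : π_j = 1} with |C(π)| = B. Then (1/N)Σ_{i=1}^N ℓ(x_i, Ω(x_i)) - (1/B)Σ_{j: π_j=1} ℓ(x_j, Ω(x_j)) ≤ K·W_X(C(π), D) + ε·K·C, where W_X(C(π), D) is the 1-Wasserstein distance between the uniform measures on C(π) and D using only the feature distance ‖·‖. -/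

import Mathlib

/-- Theorem 1 (product-metric version): if the loss `ℓ` is `K`-Lipschitz on `X × Y` with
the metric `‖x - x'‖ + ε * |y - y'|`, then the core set loss is bounded by
`K * W_X(C(π), D) + ε * K * C`, where `W_X` is the feature-space Wasserstein distance. -/
theorem stmt_10 {X : Type*} [NormedAddCommGroup X] (C N B : ℕ) (hC : 0 < C)
    (hB : 0 < B) (hBN : B ≤ N)
    (ε K : ℝ) (hε : 0 < ε) (hK : 0 ≤ K)
    (ℓ : X → Fin C → ℝ)
    (hℓ : ∀ (x x' : X) (y y' : Fin C),
      |ℓ x y - ℓ x' y'| ≤ K * (‖x - x'‖ + ε * |((y : ℕ) : ℝ) - ((y' : ℕ) : ℝ)|))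
    (Ω : X → Fin C) (x : Fin N → X)
    (π : Fin N → ℝ) (hπ : ∀ i, π i = 0 ∨ π i = 1) (hπB : ∑ i, π i = B) :
    (1 / N) * ∑ i, ℓ (x i) (Ω (x i)) - (1 / B) * ∑ i, π i * ℓ (x i) (Ω (x i)) ≤
      K * sInf {c : ℝ | ∃ Γ : Matrix (Fin N) (Fin N) ℝ,
          (∀ i j, 0 ≤ Γ i j) ∧ (∀ i, ∑ j, Γ i j = 1 / N) ∧
          (∀ j, ∑ i, Γ i j = π j / B) ∧
          c = ∑ i, ∑ j, ‖x i - x j‖ * Γ i j}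
        + ε * K * C := by
  have hN : 0 < N := lt_of_lt_of_le hB hBN
  have hNr : (0:ℝ) < N := by exact_mod_cast hN
  have hBr : (0:ℝ) < B := by exact_mod_cast hB
  have hCr : (0:ℝ) < C := by exact_mod_cast hC
  set S : Set ℝ := {c : ℝ | ∃ Γ : Matrix (Fin N) (Fin N) ℝ,
          (∀ i j, 0 ≤ Γ i j) ∧ (∀ i, ∑ j, Γ i j = 1 / N) ∧
          (∀ j, ∑ i, Γ i j = π j / B) ∧
          c = ∑ i, ∑ j, ‖x i - x j‖ * Γ i j} with hSdef
  have hπnn : ∀ i, 0 ≤ π i := by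
    intro i; rcases hπ i with h | h <;> rw [h] <;> norm_num
  -- S is nonempty
  have hne : S.Nonempty := by
    refine ⟨_, (fun i j => (1/(N:ℝ)) * (π j / B)), ?_, ?_, ?_, rfl⟩
    · intro i j
      have := hπnn j
      positivity
    · intro i
      rw [← Finset.mul_sum, ← Finset.sum_div, hπB]
      field_simp
    · intro j
      rw [Finset.sum_const, Finset.card_univ, Fintype.card_fin, nsmul_eq_mul]
      field_simp
  -- key estimate for each element of S
  have key : ∀ c ∈ S, (1 / (N:ℝ)) * ∑ i, ℓ (x i) (Ω (x i))
      - (1 / (B:ℝ)) * ∑ i, π i * ℓ (x i) (Ω (x i)) ≤ K * c + ε * K * C := by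
    rintro c ⟨Γ, hnn, hrow, hcol, rfl⟩
    have e1 : (1/(N:ℝ)) * ∑ i, ℓ (x i) (Ω (x i))
        = ∑ i, ∑ j, Γ i j * ℓ (x i) (Ω (x i)) := by
      rw [Finset.mul_sum]
      refine Finset.sum_congr rfl fun i _ => ?_
      rw [← hrow i, Finset.sum_mul]
    have e2 : (1/(B:ℝ)) * ∑ j, π j * ℓ (x j) (Ω (x j))
        = ∑ i, ∑ j, Γ i j * ℓ (x j) (Ω (x j)) := by
      rw [Finset.sum_comm, Finset.mul_sum]
      refine Finset.sum_congr rfl fun j _ => ?_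
      rw [← Finset.sum_mul, hcol j]
      ring
    rw [e1, e2]
    simp only [← Finset.sum_sub_distrib]
    have hmass : ∑ i, ∑ j, Γ i j = 1 := by
      simp only [hrow, Finset.sum_const, Finset.card_univ, Fintype.card_fin, nsmul_eq_mul]
      field_simp
    have hbound : ∀ i j : Fin N, Γ i j * ℓ (x i) (Ω (x i)) - Γ i j * ℓ (x j) (Ω (x j))
        ≤ K * (‖x i - x j‖ * Γ i j) + (ε * K * C) * Γ i j := by
      intro i j
      have h1 : ℓ (x i) (Ω (x i)) - ℓ (x j) (Ω (x j))
          ≤ K * ‖x i - x j‖ + ε * K * C := by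
        have h2 := hℓ (x i) (x j) (Ω (x i)) (Ω (x j))
        have h3 : |((Ω (x i) : ℕ) : ℝ) - ((Ω (x j) : ℕ) : ℝ)| ≤ C := by
          have hi : ((Ω (x i) : ℕ) : ℝ) ≤ (C:ℝ) - 1 := by
            have := (Ω (x i)).isLt
            have : (Ω (x i) : ℕ) ≤ C - 1 := Nat.le_pred_of_lt this
            have := (Nat.cast_le (α := ℝ)).2 this
            calc ((Ω (x i) : ℕ) : ℝ) ≤ ((C - 1 : ℕ) : ℝ) := this
              _ ≤ (C:ℝ) - 1 := by
                rw [Nat.cast_sub hC]; norm_num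
          have hj : ((Ω (x j) : ℕ) : ℝ) ≤ (C:ℝ) - 1 := by
            have := (Ω (x j)).isLt
            have : (Ω (x j) : ℕ) ≤ C - 1 := Nat.le_pred_of_lt this
            have := (Nat.cast_le (α := ℝ)).2 this
            calc ((Ω (x j) : ℕ) : ℝ) ≤ ((C - 1 : ℕ) : ℝ) := this
              _ ≤ (C:ℝ) - 1 := by
                rw [Nat.cast_sub hC]; norm_num
          have hi0 : (0:ℝ) ≤ ((Ω (x i) : ℕ) : ℝ) := Nat.cast_nonneg _
          have hj0 : (0:ℝ) ≤ ((Ω (x j) : ℕ) : ℝ) := Nat.cast_nonneg _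
          rw [abs_le]
          constructor <;> linarith
        have h4 : ℓ (x i) (Ω (x i)) - ℓ (x j) (Ω (x j)) ≤ |ℓ (x i) (Ω (x i)) - ℓ (x j) (Ω (x j))| :=
          le_abs_self _
        have h5 : ε * |((Ω (x i) : ℕ) : ℝ) - ((Ω (x j) : ℕ) : ℝ)| ≤ ε * C :=
          mul_le_mul_of_nonneg_left h3 hε.le
        nlinarith [hℓ (x i) (x j) (Ω (x i)) (Ω (x j))]
      have hg := hnn i j
      nlinarith
    calc ∑ i, ∑ j, (Γ i j * ℓ (x i) (Ω (x i)) - Γ i j * ℓ (x j) (Ω (x j)))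
        ≤ ∑ i, ∑ j, (K * (‖x i - x j‖ * Γ i j) + (ε * K * C) * Γ i j) := by
          refine Finset.sum_le_sum fun i _ => Finset.sum_le_sum fun j _ => hbound i j
      _ = K * (∑ i, ∑ j, ‖x i - x j‖ * Γ i j) + (ε * K * C) * (∑ i, ∑ j, Γ i j) := by
          simp only [Finset.sum_add_distrib, Finset.mul_sum]
      _ = K * (∑ i, ∑ j, ‖x i - x j‖ * Γ i j) + ε * K * C := by
          rw [hmass]; ring
  -- S bounded below by 0
  have hbdd : ∀ c ∈ S, (0:ℝ) ≤ c := by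
    rintro c ⟨Γ, hnn, -, -, rfl⟩
    refine Finset.sum_nonneg fun i _ => Finset.sum_nonneg fun j _ => ?_
    exact mul_nonneg (norm_nonneg _) (hnn i j)
  rcases eq_or_lt_of_le hK with hK0 | hKpos
  · have hs : (0:ℝ) ≤ sInf S := le_csInf hne hbdd
    obtain ⟨c, hc⟩ := hne
    have h := key c hc
    simp only [← hK0] at h ⊢
    norm_num at h ⊢
    linarith
  · have hdiv : ((1 / (N:ℝ)) * ∑ i, ℓ (x i) (Ω (x i))
        - (1 / (B:ℝ)) * ∑ i, π i * ℓ (x i) (Ω (x i)) - ε * K * C) / K ≤ sInf S := by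
      refine le_csInf hne fun c hc => ?_
      rw [div_le_iff₀ hKpos]
      have := key c hc
      nlinarith
    rw [div_le_iff₀ hKpos] at hdiv
    nlinarith
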